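/- Let L be the Motzkin rule operator. Then for every natural number n and every polynomial p ∈ ℝ[X] with zero constant coefficient, L^n(X·p) = X·L^n(p) + Σ_{i=0}^{n-1} ((L^{n-1-i}(p)) evaluated at 1) · L^i(X). (In operator form on xK[x]: L^n∘𝐱 = 𝐱∘L^n + Σ_{i=0}^{n-1} L^i ∘ c₁ ∘ L^{n-1-i}.) -/
import Mathlib


open Polynomial

private lemma geomS (m : ℕ) :
    (∑ i ∈ Finset.Icc 1 (m + 1), (X : ℝ[X]) ^ i)
      = X * (∑ i ∈ Finset.Icc 1 m, (X : ℝ[X]) ^ i) + X := by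
  induction m with
  | zero => simp
  | succ m ih =>
    rw [Finset.sum_Icc_succ_top (by omega : 1 ≤ m + 2),
      Finset.sum_Icc_succ_top (by omega : 1 ≤ m + 1)]
    rw [Finset.sum_Icc_succ_top (by omega : 1 ≤ m + 1)] at ih
    linear_combination ih

private lemma aux1 (L : Module.End ℝ (Polynomial ℝ))
    (hL1 : L X = X ^ 2)
    (hL : ∀ k : ℕ, 2 ≤ k →
      L (X ^ k) = (∑ i ∈ Finset.Icc 1 (k - 1), X ^ i) + X ^ (k + 1))
    (q : ℝ[X]) :
    L (X ^ 2 * q) = X * L (X * q) + q.eval 1 • X := by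
  induction q using Polynomial.induction_on' with
  | add p q hp hq =>
    rw [mul_add, map_add, hp, mul_add, map_add, hq, eval_add, add_smul]
    ring
  | monomial n a =>
    rw [← C_mul_X_pow_eq_monomial]
    have e1 : (X : ℝ[X]) ^ 2 * (C a * X ^ n) = a • X ^ (n + 2) := by
      rw [smul_eq_C_mul]; ring
    have e2 : (X : ℝ[X]) * (C a * X ^ n) = a • X ^ (n + 1) := by
      rw [smul_eq_C_mul]; ring
    rw [e1, e2, map_smul, map_smul]
    have he : (C a * X ^ n : ℝ[X]).eval 1 = a := by simp
    rw [he]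
    cases n with
    | zero =>
      rw [hL 2 (by norm_num), (by norm_num : (0 : ℕ) + 1 = 1), pow_one, hL1]
      simp only [(by norm_num : (2 : ℕ) - 1 = 1), Finset.Icc_self,
        Finset.sum_singleton, pow_one, smul_eq_C_mul]
      ring
    | succ m =>
      rw [hL (m + 3) (by omega), hL (m + 2) (by omega)]
      have h3 : m + 3 - 1 = (m + 1) + 1 := by omega
      have h2 : m + 2 - 1 = m + 1 := by omega
      rw [h3, h2, geomS (m + 1)]
      simp only [smul_eq_C_mul]
      ring

private lemma aux2 (L : Module.End ℝ (Polynomial ℝ))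
    (hL1 : L X = X ^ 2)
    (hL : ∀ k : ℕ, 2 ≤ k →
      L (X ^ k) = (∑ i ∈ Finset.Icc 1 (k - 1), X ^ i) + X ^ (k + 1))
    (q : ℝ[X]) :
    (L (X * q)).coeff 0 = 0 := by
  induction q using Polynomial.induction_on' with
  | add p q hp hq => rw [mul_add, map_add, coeff_add, hp, hq, add_zero]
  | monomial n a =>
    rw [← C_mul_X_pow_eq_monomial]
    have e2 : (X : ℝ[X]) * (C a * X ^ n) = a • X ^ (n + 1) := by
      rw [smul_eq_C_mul]; ring
    rw [e2, map_smul]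
    cases n with
    | zero => simp [hL1, coeff_X_pow]
    | succ m =>
      rw [hL (m + 2) (by omega), coeff_smul, coeff_add, finset_sum_coeff]
      rw [Finset.sum_eq_zero (fun i hi => by
        rw [coeff_X_pow]
        simp only [Finset.mem_Icc] at hi
        simp only [ite_eq_right_iff]
        omega)]
      simp [coeff_X_pow]

private lemma key (L : Module.End ℝ (Polynomial ℝ))
    (hL1 : L X = X ^ 2)
    (hL : ∀ k : ℕ, 2 ≤ k →
      L (X ^ k) = (∑ i ∈ Finset.Icc 1 (k - 1), X ^ i) + X ^ (k + 1))
    (p : ℝ[X]) (hp : p.coeff 0 = 0) :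
    L (X * p) = X * L p + p.eval 1 • X := by
  have hdiv : X * p.divX = p := by
    have := X_mul_divX_add p
    rw [hp, map_zero, add_zero] at this
    exact this
  have hev : (p.divX).eval 1 = p.eval 1 := by
    conv_rhs => rw [← hdiv]
    simp
  have h := aux1 L hL1 hL p.divX
  rw [show (X : ℝ[X]) ^ 2 * p.divX = X * (X * p.divX) by ring, hdiv, hev] at h
  exact h

private lemma coeff0 (L : Module.End ℝ (Polynomial ℝ))
    (hL1 : L X = X ^ 2)
    (hL : ∀ k : ℕ, 2 ≤ k →
      L (X ^ k) = (∑ i ∈ Finset.Icc 1 (k - 1), X ^ i) + X ^ (k + 1))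
    (p : ℝ[X]) (hp : p.coeff 0 = 0) :
    (L p).coeff 0 = 0 := by
  have hdiv : X * p.divX = p := by
    have := X_mul_divX_add p
    rw [hp, map_zero, add_zero] at this
    exact this
  have h := aux2 L hL1 hL p.divX
  rw [hdiv] at h
  exact h

/-- For the Motzkin rule operator `L`, one has
`L^n ∘ 𝐱 = 𝐱 ∘ L^n + Σ_{i=0}^{n-1} L^i ∘ c₁ ∘ L^{n-1-i}` on the subspace of
polynomials with zero constant coefficient, where `c₁ : p ↦ p(1)·X`. -/
theorem motzkin_operator_power_mul_X
    (L : Module.End ℝ (Polynomial ℝ))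
    (hL1 : L X = X ^ 2)
    (hL : ∀ k : ℕ, 2 ≤ k →
      L (X ^ k) = (∑ i ∈ Finset.Icc 1 (k - 1), X ^ i) + X ^ (k + 1))
    (n : ℕ) (p : Polynomial ℝ) (hp : p.coeff 0 = 0) :
    (L ^ n) (X * p) =
      X * (L ^ n) p +
        ∑ i ∈ Finset.range n, ((L ^ (n - 1 - i)) p).eval 1 • (L ^ i) X := by
  induction n generalizing p with
  | zero => simp
  | succ n ih =>
    rw [pow_succ, Module.End.mul_apply, key L hL1 hL p hp, map_add, map_smul,
      ih (L p) (coeff0 L hL1 hL p hp)]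
    rw [Finset.sum_range_succ]
    have h1 : ∀ i ∈ Finset.range n,
        ((L ^ (n - 1 - i)) (L p)).eval 1 • (L ^ i) X
          = ((L ^ (n + 1 - 1 - i)) p).eval 1 • (L ^ i) X := by
      intro i hi
      simp only [Finset.mem_range] at hi
      have e : n + 1 - 1 - i = (n - 1 - i) + 1 := by omega
      rw [e, pow_succ, Module.End.mul_apply]
    rw [Finset.sum_congr rfl h1]
    have e0 : n + 1 - 1 - n = 0 := by omega
    rw [e0, pow_zero, Module.End.one_apply, ← Module.End.mul_apply, ← pow_succ]
    abel
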